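/- If T, S ∈ AddMonoidAlgebra ℂ ℝ satisfy T * S = 1 (convolution product, with 1 the delta at 0), then there exist a ∈ ℝ and a nonzero c ∈ ℂ such that T = single(a, c). In other words, the units of the convolution algebra of finite linear combinations of Dirac deltas on ℝ are exactly the nonzero scalar multiples of single Dirac deltas. -/

import Mathlib

open AddMonoidAlgebra Finsupp

private lemma key_apply (T S : AddMonoidAlgebra ℂ ℝ) {a b : ℝ}
    (hT : ∀ x ∈ T.coeff.support, x ≤ a) (hS : ∀ x ∈ S.coeff.support, x ≤ b) :
    (T * S).coeff (a + b) = T.coeff a * S.coeff b := by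
  classical
  simp_rw [AddMonoidAlgebra.mul_apply, Finsupp.sum]
  rw [Finset.sum_eq_single a, Finset.sum_eq_single b, if_pos rfl]
  · intro y hy hne
    exact if_neg fun he => hne (by have := hS y hy; linarith)
  · intro hb
    rw [if_pos rfl, Finsupp.notMem_support_iff.1 hb, mul_zero]
  · intro x hx hne
    refine Finset.sum_eq_zero fun y hy => if_neg fun he => ?_
    have h1 := hT x hx
    have h2 := hS y hy
    exact hne (by linarith)
  · intro ha
    refine Finset.sum_eq_zero fun y _ => ?_
    rw [Finsupp.notMem_support_iff.1 ha, zero_mul, ite_self]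

private lemma key_apply' (T S : AddMonoidAlgebra ℂ ℝ) {a b : ℝ}
    (hT : ∀ x ∈ T.coeff.support, a ≤ x) (hS : ∀ x ∈ S.coeff.support, b ≤ x) :
    (T * S).coeff (a + b) = T.coeff a * S.coeff b := by
  classical
  simp_rw [AddMonoidAlgebra.mul_apply, Finsupp.sum]
  rw [Finset.sum_eq_single a, Finset.sum_eq_single b, if_pos rfl]
  · intro y hy hne
    exact if_neg fun he => hne (by have := hS y hy; linarith)
  · intro hb
    rw [if_pos rfl, Finsupp.notMem_support_iff.1 hb, mul_zero]
  · intro x hx hne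
    refine Finset.sum_eq_zero fun y hy => if_neg fun he => ?_
    have h1 := hT x hx
    have h2 := hS y hy
    exact hne (by linarith)
  · intro ha
    refine Finset.sum_eq_zero fun y _ => ?_
    rw [Finsupp.notMem_support_iff.1 ha, zero_mul, ite_self]
/-- The units of the convolution algebra `AddMonoidAlgebra ℂ ℝ` of finite linear
combinations of Dirac delta distributions on `ℝ` are exactly the nonzero scalar
multiples of single Dirac deltas: if `T * S = 1` then `T = single a c` for some
`a : ℝ` and nonzero `c : ℂ`. -/
theorem addMonoidAlgebra_unit_is_single (T S : AddMonoidAlgebra ℂ ℝ)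
    (h : T * S = 1) :
    ∃ (a : ℝ) (c : ℂ), c ≠ 0 ∧ T = AddMonoidAlgebra.single a c := by
  have hT : T ≠ 0 := by rintro rfl; simp at h
  have hS : S ≠ 0 := by rintro rfl; simp at h
  have hTs : T.coeff.support.Nonempty := Finsupp.support_nonempty_iff.2 (AddMonoidAlgebra.coeff_eq_zero.not.2 hT)
  have hSs : S.coeff.support.Nonempty := Finsupp.support_nonempty_iff.2 (AddMonoidAlgebra.coeff_eq_zero.not.2 hS)
  set MT := T.coeff.support.max' hTs with hMT
  set mT := T.coeff.support.min' hTs with hmT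
  set MS := S.coeff.support.max' hSs with hMS
  set mS := S.coeff.support.min' hSs with hmS
  have hone : ∀ x : ℝ, (1 : AddMonoidAlgebra ℂ ℝ).coeff x ≠ 0 → x = 0 := by
    intro x hx
    by_contra hne
    apply hx
    rw [AddMonoidAlgebra.one_def]
    exact Finsupp.single_eq_of_ne' fun h0 => hne h0.symm
  have h1 : (T * S).coeff (MT + MS) ≠ 0 := by
    rw [key_apply T S (fun x hx => Finset.le_max' _ x hx)
      (fun x hx => Finset.le_max' _ x hx)]
    exact mul_ne_zero (Finsupp.mem_support_iff.1 (T.coeff.support.max'_mem hTs))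
      (Finsupp.mem_support_iff.1 (S.coeff.support.max'_mem hSs))
  have h2 : (T * S).coeff (mT + mS) ≠ 0 := by
    rw [key_apply' T S (fun x hx => Finset.min'_le _ x hx)
      (fun x hx => Finset.min'_le _ x hx)]
    exact mul_ne_zero (Finsupp.mem_support_iff.1 (T.coeff.support.min'_mem hTs))
      (Finsupp.mem_support_iff.1 (S.coeff.support.min'_mem hSs))
  rw [h] at h1 h2
  have e1 : MT + MS = 0 := hone _ h1
  have e2 : mT + mS = 0 := hone _ h2
  have hle1 : mT ≤ MT := Finset.min'_le _ _ (T.coeff.support.max'_mem hTs)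
  have hle2 : mS ≤ MS := Finset.min'_le _ _ (S.coeff.support.max'_mem hSs)
  have heq : MT = mT := le_antisymm (by linarith) hle1
  have hsupp : T.coeff.support = {MT} := by
    apply Finset.eq_singleton_iff_nonempty_unique_mem.2
    refine ⟨hTs, fun x hx => le_antisymm (Finset.le_max' _ x hx) ?_⟩
    rw [heq]; exact Finset.min'_le _ x hx
  refine ⟨MT, T.coeff MT, ?_, ?_⟩
  · exact Finsupp.mem_support_iff.1 (T.coeff.support.max'_mem hTs)
  · exact AddMonoidAlgebra.coeff_injective (Finsupp.support_eq_singleton.1 hsupp).2
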